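/- Every 2-dimensional Lie subalgebra of sl(2,ℂ) is noncommutative, and is conjugate (under the adjoint action of SL(2,ℂ), i.e. by x ↦ gxg⁻¹ for some g ∈ SL(2,ℂ)) to the subalgebra {[[a,b],[0,-a]] : a, b ∈ ℂ} of upper-triangular trace-zero matrices. -/

import Mathlib

open Matrix

abbrev M2 := Matrix (Fin 2) (Fin 2) ℂ

section helpers

lemma trace_eq (u : Matrix (Fin 2) (Fin 2) ℂ) (hu : u.trace = 0) : u 1 1 = - u 0 0 := by
  simp [Matrix.trace, Fin.sum_univ_two, Matrix.diag] at hu; linear_combination hu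

lemma repr_tr (w : Matrix (Fin 2) (Fin 2) ℂ) (h0 : w.trace = 0) :
    ∃ a b c : ℂ, w = !![a, b; c, -a] := by
  refine ⟨w 0 0, w 0 1, w 1 0, ?_⟩
  have h11 := trace_eq w h0
  ext i j; fin_cases i <;> fin_cases j <;> simp [h11]

lemma sq_zero (w : Matrix (Fin 2) (Fin 2) ℂ) (h0 : w.trace = 0) (h2 : (w * w).trace = 0) :
    w * w = 0 := by
  obtain ⟨a, b, c, rfl⟩ := repr_tr w h0
  have hd : a * a + b * c = 0 := by
    simp [Matrix.trace, Fin.sum_univ_two, Matrix.diag, Matrix.mul_apply] at h2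
    linear_combination h2 / 2
  ext i j; fin_cases i <;> fin_cases j <;>
    simp [Matrix.mul_apply, Fin.sum_univ_two] <;>
    first | linear_combination hd | linear_combination -hd | ring

/-- conjugating a nonzero square-zero trace-zero matrix to e₀₁ -/
lemma conj_to_e (w : Matrix (Fin 2) (Fin 2) ℂ) (h0 : w.trace = 0) (hsq : w * w = 0)
    (hw : w ≠ 0) : ∃ g : Matrix.SpecialLinearGroup (Fin 2) ℂ,
      (g : Matrix (Fin 2) (Fin 2) ℂ) * w * ((g⁻¹ : Matrix.SpecialLinearGroup (Fin 2) ℂ) :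
        Matrix (Fin 2) (Fin 2) ℂ) = !![0, 1; 0, 0] := by
  obtain ⟨a, b, c, rfl⟩ := repr_tr w h0
  have hd : a * a + b * c = 0 := by
    have := congrFun (congrFun hsq 0) 0
    simpa [Matrix.mul_apply, Fin.sum_univ_two] using this
  suffices hP : ∃ P : Matrix.SpecialLinearGroup (Fin 2) ℂ,
      !![a, b; c, -a] * (P : Matrix (Fin 2) (Fin 2) ℂ)
        = (P : Matrix (Fin 2) (Fin 2) ℂ) * !![0, 1; 0, 0] by
    obtain ⟨P, hP⟩ := hP
    refine ⟨P⁻¹, ?_⟩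
    have h1 : ((P⁻¹ : Matrix.SpecialLinearGroup (Fin 2) ℂ) : Matrix (Fin 2) (Fin 2) ℂ) *
        (P : Matrix (Fin 2) (Fin 2) ℂ) = 1 := by
      rw [← Matrix.SpecialLinearGroup.coe_mul, inv_mul_cancel]; rfl
    rw [inv_inv, mul_assoc, hP, ← mul_assoc, h1, one_mul]
  by_cases hc : c ≠ 0
  · obtain ⟨t, ht⟩ := IsAlgClosed.exists_pow_nat_eq (-c⁻¹) (n := 2) (by norm_num)
    refine ⟨⟨!![t * a, t; t * c, 0], ?_⟩, ?_⟩
    · rw [Matrix.det_fin_two_of]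
      have hinv : c * c⁻¹ = 1 := mul_inv_cancel₀ hc
      linear_combination (-c) * ht + hinv
    · ext i j
      fin_cases i <;> fin_cases j <;>
        simp [Matrix.mul_apply, Fin.sum_univ_two] <;>
        first | linear_combination t * hd | linear_combination -t * hd | ring
  · push_neg at hc
    have ha : a = 0 := by
      have := hd; rw [hc, mul_zero, add_zero] at this
      exact mul_self_eq_zero.mp this
    have hb : b ≠ 0 := by
      intro hb; apply hw
      ext i j; fin_cases i <;> fin_cases j <;> simp [ha, hb, hc]
    obtain ⟨t, ht⟩ := IsAlgClosed.exists_pow_nat_eq (b⁻¹) (n := 2) (by norm_num)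
    refine ⟨⟨!![t * b, 0; 0, t], ?_⟩, ?_⟩
    · rw [Matrix.det_fin_two_of]
      have hinv : b * b⁻¹ = 1 := mul_inv_cancel₀ hb
      linear_combination b * ht + hinv
    · ext i j
      fin_cases i <;> fin_cases j <;>
        simp [Matrix.mul_apply, Fin.sum_univ_two, ha, hc] <;> ring


lemma comm_prop (u v : Matrix (Fin 2) (Fin 2) ℂ) (hu : u.trace = 0) (hv : v.trace = 0)
    (hc : u * v = v * u) (hu0 : u ≠ 0) : ∃ t : ℂ, v = t • u := by
  have hu11 : u 1 1 = - u 0 0 := trace_eq u hu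
  have hv11 : v 1 1 = - v 0 0 := trace_eq v hv
  have e1 : u 0 1 * v 1 0 = v 0 1 * u 1 0 := by
    have := congrFun (congrFun hc 0) 0
    simp [Matrix.mul_apply, Fin.sum_univ_two] at this; linear_combination this
  have e2 : u 0 0 * v 0 1 = u 0 1 * v 0 0 := by
    have := congrFun (congrFun hc 0) 1
    simp [Matrix.mul_apply, Fin.sum_univ_two, hu11, hv11] at this; linear_combination this / 2
  have e3 : u 1 0 * v 0 0 = u 0 0 * v 1 0 := by
    have := congrFun (congrFun hc 1) 0
    simp [Matrix.mul_apply, Fin.sum_univ_two, hu11, hv11] at this; linear_combination this / 2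
  have key : ∀ t : ℂ, v 0 0 = t * u 0 0 → v 0 1 = t * u 0 1 → v 1 0 = t * u 1 0 →
      v = t • u := by
    intro t h1 h2 h3
    ext i j; fin_cases i <;> fin_cases j <;>
      simp only [Matrix.smul_apply, smul_eq_mul] <;>
      first
        | exact h1 | exact h2 | exact h3
        | (show v 1 1 = t * u 1 1; rw [hu11, hv11, h1]; ring)
  by_cases ha : u 0 0 ≠ 0
  · exact ⟨v 0 0 / u 0 0, key _ (by field_simp) (by field_simp; linear_combination e2)
      (by field_simp; linear_combination -e3)⟩
  · push_neg at ha
    by_cases hb : u 0 1 ≠ 0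
    · refine ⟨v 0 1 / u 0 1, key _ ?_ (by field_simp) (by field_simp; linear_combination e1)⟩
      have : v 0 0 = 0 := by
        rcases mul_eq_zero.mp (by rw [← e2, ha, zero_mul]) with h | h
        · exact absurd h hb
        · exact h
      rw [this, ha]; ring
    · push_neg at hb
      by_cases hcc : u 1 0 ≠ 0
      · refine ⟨v 1 0 / u 1 0, key _ ?_ ?_ (by field_simp)⟩
        · have : v 0 0 = 0 := by
            rcases mul_eq_zero.mp (by rw [e3, ha, zero_mul]) with h | h
            · exact absurd h hcc
            · exact h
          rw [this, ha]; ring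
        · have : v 0 1 = 0 := by
            rcases mul_eq_zero.mp (show v 0 1 * u 1 0 = 0 by rw [← e1, hb, zero_mul]) with h | h
            · exact h
            · exact absurd h hcc
          rw [this, hb]; ring
      · exfalso; push_neg at hcc
        apply hu0; ext i j; fin_cases i <;> fin_cases j <;>
          simp [ha, hb, hcc] <;> rw [hu11, ha] <;> ring
lemma lieself (u v : M2) : ((u * v - v * u) * u).trace = 0 := by
  rw [Matrix.sub_mul, Matrix.trace_sub, Matrix.trace_mul_cycle v u u, sub_self]

lemma coe_inv_mul (g : Matrix.SpecialLinearGroup (Fin 2) ℂ) :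
    ((g⁻¹ : Matrix.SpecialLinearGroup (Fin 2) ℂ) : M2) * (g : M2) = 1 := by
  rw [← Matrix.SpecialLinearGroup.coe_mul, inv_mul_cancel]; rfl

lemma coe_mul_inv (g : Matrix.SpecialLinearGroup (Fin 2) ℂ) :
    (g : M2) * ((g⁻¹ : Matrix.SpecialLinearGroup (Fin 2) ℂ) : M2) = 1 := by
  rw [← Matrix.SpecialLinearGroup.coe_mul, mul_inv_cancel]; rfl

-- conjugation linear equivalence
noncomputable def conjEquiv (g : Matrix.SpecialLinearGroup (Fin 2) ℂ) : M2 ≃ₗ[ℂ] M2 :=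
  LinearEquiv.ofLinear
    ((LinearMap.mulLeft ℂ (g : M2)).comp (LinearMap.mulRight ℂ ((g⁻¹ : Matrix.SpecialLinearGroup (Fin 2) ℂ) : M2)))
    ((LinearMap.mulLeft ℂ ((g⁻¹ : Matrix.SpecialLinearGroup (Fin 2) ℂ) : M2)).comp (LinearMap.mulRight ℂ (g : M2)))
    (LinearMap.ext fun x => by
      simp only [LinearMap.comp_apply, LinearMap.mulLeft_apply, LinearMap.mulRight_apply,
        LinearMap.id_apply]
      trans ((g : M2) * ((g⁻¹ : Matrix.SpecialLinearGroup (Fin 2) ℂ) : M2)) * x * ((g : M2) * ((g⁻¹ : Matrix.SpecialLinearGroup (Fin 2) ℂ) : M2))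
      · noncomm_ring
      · rw [coe_mul_inv]; noncomm_ring)
    (LinearMap.ext fun x => by
      simp only [LinearMap.comp_apply, LinearMap.mulLeft_apply, LinearMap.mulRight_apply,
        LinearMap.id_apply]
      trans (((g⁻¹ : Matrix.SpecialLinearGroup (Fin 2) ℂ) : M2) * (g : M2)) * x * (((g⁻¹ : Matrix.SpecialLinearGroup (Fin 2) ℂ) : M2) * (g : M2))
      · noncomm_ring
      · rw [coe_inv_mul]; noncomm_ring)

lemma conjEquiv_apply (g : Matrix.SpecialLinearGroup (Fin 2) ℂ) (x : M2) :
    conjEquiv g x = (g : M2) * x * ((g⁻¹ : Matrix.SpecialLinearGroup (Fin 2) ℂ) : M2) := by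
  rw [show conjEquiv g x = (g : M2) * (x * ((g⁻¹ : Matrix.SpecialLinearGroup (Fin 2) ℂ) : M2)) from rfl, mul_assoc]

lemma conjEquiv_mul (g : Matrix.SpecialLinearGroup (Fin 2) ℂ) (x y : M2) :
    conjEquiv g (x * y) = conjEquiv g x * conjEquiv g y := by
  simp only [conjEquiv_apply]
  trans (g : M2) * x * (((g⁻¹ : Matrix.SpecialLinearGroup (Fin 2) ℂ) : M2) * (g : M2)) * y * ((g⁻¹ : Matrix.SpecialLinearGroup (Fin 2) ℂ) : M2)
  · rw [coe_inv_mul]; noncomm_ring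
  · noncomm_ring

lemma conjEquiv_trace (g : Matrix.SpecialLinearGroup (Fin 2) ℂ) (x : M2) :
    (conjEquiv g x).trace = x.trace := by
  rw [conjEquiv_apply, Matrix.trace_mul_cycle, coe_inv_mul, one_mul]
end helpers
attribute [local instance 100] LieRing.ofAssociativeRing

/-- Every 2-dimensional Lie subalgebra `h` of `sl(2,ℂ)` (a 2-dimensional subalgebra of
the matrix Lie algebra consisting of trace-zero matrices) is noncommutative, and is
conjugate under `SL(2,ℂ)` to the subalgebra `{[[a,b],[0,-a]] : a, b ∈ ℂ}` of
upper-triangular trace-zero matrices. -/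
theorem two_dim_subalgebra_sl2_conjugate_to_borel
    (h : LieSubalgebra ℂ (Matrix (Fin 2) (Fin 2) ℂ))
    (htr : ∀ x ∈ h, Matrix.trace x = 0)
    (hdim : Module.finrank ℂ h = 2) :
    (∃ x ∈ h, ∃ y ∈ h, ⁅x, y⁆ ≠ 0) ∧
    ∃ g : Matrix.SpecialLinearGroup (Fin 2) ℂ,
      {y : Matrix (Fin 2) (Fin 2) ℂ | ∃ x ∈ h,
          y = (g : Matrix (Fin 2) (Fin 2) ℂ) * x * ((g⁻¹ : Matrix.SpecialLinearGroup (Fin 2) ℂ) : Matrix (Fin 2) (Fin 2) ℂ)}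
        = {y : Matrix (Fin 2) (Fin 2) ℂ | ∃ a b : ℂ, y = !![a, b; 0, -a]} := by
  classical
  haveI hfd : FiniteDimensional ℂ h := FiniteDimensional.of_finrank_eq_succ hdim
  let B : Module.Basis (Fin 2) ℂ h := Module.finBasisOfFinrankEq ℂ h hdim
  set u : M2 := (B 0 : M2) with hu_def
  set v : M2 := (B 1 : M2) with hv_def
  have hu : u ∈ h := (B 0).2
  have hv : v ∈ h := (B 1).2
  have hind : LinearIndependent ℂ ![u, v] := by
    have h1 := B.linearIndependent.map' h.toSubmodule.subtype
      (Submodule.ker_subtype _)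
    have h2 : ![u, v] = (⇑h.toSubmodule.subtype ∘ ⇑B) := by
      funext i; fin_cases i <;> rfl
    rw [h2]; exact h1
  have hv0 : v ≠ 0 ∧ ∀ a : ℂ, a • v ≠ u := by
    have := linearIndependent_fin2.mp hind
    simpa using this
  -- noncommutativity
  have hw0 : u * v - v * u ≠ 0 := by
    intro hc
    obtain ⟨t, ht⟩ := comm_prop v u (htr v hv) (htr u hu) (sub_eq_zero.mp hc).symm hv0.1
    exact hv0.2 t ht.symm
  have goal1 : ∃ x ∈ h, ∃ y ∈ h, ⁅x, y⁆ ≠ 0 :=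
    ⟨u, hu, v, hv, by rw [Ring.lie_def]; exact hw0⟩
  -- the bracket w
  set w : M2 := u * v - v * u with hw_def
  have wmem : w ∈ h := by
    have := h.lie_mem hu hv
    rwa [Ring.lie_def] at this
  have hwtr : w.trace = 0 := htr w wmem
  -- span equality
  have hle : Submodule.span ℂ {u, v} ≤ h.toSubmodule := by
    apply Submodule.span_le.mpr
    intro x hx
    rcases hx with rfl | hx
    · exact hu
    · rcases hx with rfl; exact hv
  have hsp : Submodule.span ℂ {u, v} = h.toSubmodule := by
    apply Submodule.eq_of_le_of_finrank_le hle
    have hr : Set.range ![u, v] = {u, v} := by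
      simp [Matrix.range_cons, Matrix.range_empty]
      exact Set.pair_comm v u
    have h2 : Module.finrank ℂ (Submodule.span ℂ {u, v}) = 2 := by
      rw [← hr, finrank_span_eq_card hind, Fintype.card_fin]
    rw [h2]
    exact le_of_eq hdim
  have wspan : w ∈ Submodule.span ℂ {u, v} := by rw [hsp]; exact wmem
  obtain ⟨α, β, hαβ⟩ := Submodule.mem_span_pair.mp wspan
  -- w is nilpotent
  have hwsqtr : (w * w).trace = 0 := by
    have e1 : (w * u).trace = 0 := lieself u v
    have e2 : (w * v).trace = 0 := by
      have h3 : w * v = -((v * u - u * v) * v) := by rw [hw_def]; noncomm_ring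
      rw [h3, Matrix.trace_neg, lieself v u, neg_zero]
    have h3 : w * w = α • (w * u) + β • (w * v) := by
      conv_lhs => rw [show w * w = w * (α • u + β • v) by rw [hαβ]]
      rw [Matrix.mul_add, Matrix.mul_smul, Matrix.mul_smul]
    rw [h3, Matrix.trace_add, Matrix.trace_smul, Matrix.trace_smul, e1, e2]
    simp
  have hwsq : w * w = 0 := sq_zero w hwtr hwsqtr
  obtain ⟨g, hg⟩ := conj_to_e w hwtr hwsq hw0
  refine ⟨goal1, g, ?_⟩
  -- the conjugated subalgebra as a submodule
  set E : M2 := !![(0:ℂ), 1; 0, 0] with hE_def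
  set H : M2 := !![(1:ℂ), 0; 0, -1] with hH_def
  set h' : Submodule ℂ M2 := Submodule.map (conjEquiv g).toLinearMap h.toSubmodule with h'_def
  have hmem' : ∀ x : M2, x ∈ h' ↔ ∃ y ∈ h, conjEquiv g y = x := by
    intro x
    rw [h'_def, Submodule.mem_map]
    rfl
  have hE : E ∈ h' := (hmem' E).mpr ⟨w, wmem, by rw [conjEquiv_apply]; exact hg⟩
  have htr' : ∀ x ∈ h', Matrix.trace x = 0 := by
    intro x hx
    obtain ⟨y, hy, rfl⟩ := (hmem' x).mp hx
    rw [conjEquiv_trace]; exact htr y hy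
  have hrank' : Module.finrank ℂ h' = 2 := by
    rw [h'_def, LinearEquiv.finrank_map_eq]
    exact hdim
  have hclosed : ∀ x ∈ h', x * E - E * x ∈ h' := by
    intro x hx
    obtain ⟨y, hy, rfl⟩ := (hmem' x).mp hx
    refine (hmem' _).mpr ⟨y * w - w * y, ?_, ?_⟩
    · have := h.lie_mem hy wmem; rwa [Ring.lie_def] at this
    · rw [map_sub, conjEquiv_mul, conjEquiv_mul]
      rw [show conjEquiv g w = E from by rw [conjEquiv_apply]; exact hg]
  have hE0 : E ≠ 0 := by
    intro hc
    have := congrFun (congrFun hc 0) 1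
    simp [hE_def] at this
  -- every element of h' is upper triangular
  have hupper : ∀ x ∈ h', x 1 0 = 0 := by
    intro x hx
    by_cases hsx : ∃ s : ℂ, x = s • E
    · obtain ⟨s, rfl⟩ := hsx
      simp [hE_def]
    · have hind2 : LinearIndependent ℂ ![x, E] := by
        rw [linearIndependent_fin2]
        refine ⟨by simpa using hE0, fun a ha => hsx ⟨a, ?_⟩⟩
        simpa using ha.symm
      have hle2 : Submodule.span ℂ {x, E} ≤ h' := by
        apply Submodule.span_le.mpr
        intro z hz
        rcases hz with rfl | hz
        · exact hx
        · rcases hz with rfl; exact hE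
      have hsp2 : Submodule.span ℂ {x, E} = h' := by
        apply Submodule.eq_of_le_of_finrank_le hle2
        have hr : Set.range ![x, E] = {x, E} := by
          simp [Matrix.range_cons, Matrix.range_empty]
          exact Set.pair_comm E x
        rw [hrank', ← hr, finrank_span_eq_card hind2, Fintype.card_fin]
      have hbr : x * E - E * x ∈ Submodule.span ℂ {x, E} := by
        rw [hsp2]; exact hclosed x hx
      obtain ⟨α', β', hαβ'⟩ := Submodule.mem_span_pair.mp hbr
      obtain ⟨p, q, r, hxr⟩ := repr_tr x (htr' x hx)
      rw [hxr] at hαβ' ⊢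
      have eq10 : α' * r = 0 := by
        have := congrFun (congrFun hαβ' 1) 0
        simpa [hE_def, Matrix.mul_apply, Fin.sum_univ_two] using this
      have eq00 : α' * p = -r := by
        have := congrFun (congrFun hαβ' 0) 0
        simpa [hE_def, Matrix.mul_apply, Fin.sum_univ_two] using this
      have : r = 0 := by
        rcases mul_eq_zero.mp eq10 with h0 | h0
        · rw [h0, zero_mul] at eq00; linear_combination eq00
        · exact h0
      simp [this]
  -- h' equals the Borel span
  have hHE : LinearIndependent ℂ ![H, E] := by
    rw [linearIndependent_fin2]
    constructor
    · simpa using hE0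
    · intro a hc
      have := congrFun (congrFun hc 0) 0
      simp [hE_def, hH_def] at this
  have hble : h' ≤ Submodule.span ℂ {H, E} := by
    intro x hx
    obtain ⟨p, q, r, hxr⟩ := repr_tr x (htr' x hx)
    have hr0 : r = 0 := by
      have := hupper x hx
      rw [hxr] at this
      simpa using this
    apply Submodule.mem_span_pair.mpr
    refine ⟨p, q, ?_⟩
    rw [hxr, hr0]
    ext i j; fin_cases i <;> fin_cases j <;> simp [hH_def, hE_def]
  have hbeq : h' = Submodule.span ℂ {H, E} := by
    apply Submodule.eq_of_le_of_finrank_le hble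
    have hr : Set.range ![H, E] = {H, E} := by
      simp [Matrix.range_cons, Matrix.range_empty]
      exact Set.pair_comm E H
    rw [hrank', ← hr, finrank_span_eq_card hHE, Fintype.card_fin]
  -- conclude the set equality
  have hset1 : {y : M2 | ∃ x ∈ h,
      y = (g : M2) * x * ((g⁻¹ : Matrix.SpecialLinearGroup (Fin 2) ℂ) : M2)} = (h' : Set M2) := by
    ext y
    simp only [Set.mem_setOf_eq, SetLike.mem_coe, hmem']
    constructor
    · rintro ⟨x, hx, rfl⟩
      exact ⟨x, hx, (conjEquiv_apply g x).symm ▸ rfl⟩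
    · rintro ⟨x, hx, rfl⟩
      exact ⟨x, hx, (conjEquiv_apply g x)⟩
  rw [hset1, hbeq]
  ext y
  simp only [SetLike.mem_coe, Set.mem_setOf_eq, Submodule.mem_span_pair]
  constructor
  · rintro ⟨a, b, rfl⟩
    refine ⟨a, b, ?_⟩
    ext i j; fin_cases i <;> fin_cases j <;> simp [hH_def, hE_def]
  · rintro ⟨a, b, rfl⟩
    refine ⟨a, b, ?_⟩
    ext i j; fin_cases i <;> fin_cases j <;> simp [hH_def, hE_def]
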